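/- For the k = 1 limit amplituhedron (pizza slice) P = {(b, c) ∈ ℝ² : b² ≤ c ≤ b}, the rational 2-form Ω = 1/((c − b²)(c − b)) db ∧ dc is, up to a nonzero scalar, the unique rational 2-form on ℝ² with simple poles exactly along the curves c = b² and c = b and no other poles, whose residue along each boundary curve is a 1-form with simple poles only at the two vertices (0,0) and (1,1); moreover the residue of Ω along c = b is db/(b² − b) = db·(1/(b−1) − 1/b), whose residues at b = 0 and b = 1 are −1 and +1 respectively. -/

import Mathlib

open Polynomial Filter

/-- A real polynomial bounded on `[1, ∞)` is constant. -/
lemma bounded_poly_const (q : Polynomial ℝ) (M : ℝ)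
    (h : ∀ b : ℝ, 1 ≤ b → |q.eval b| ≤ M) : ∀ b : ℝ, q.eval b = q.eval 0 := by
  have hb : IsBoundedUnder (· ≤ ·) atTop fun x => |q.eval x| :=
    ⟨M, eventually_map.mpr (eventually_atTop.mpr ⟨1, h⟩)⟩
  have hdeg : q.degree ≤ 0 := (Polynomial.abs_isBoundedUnder_iff q).mp hb
  have := Polynomial.eq_C_of_degree_le_zero hdeg
  intro b; rw [this]; simp

/-- A real polynomial vanishing on an infinite set is zero. -/
lemma poly_zero_of_infinite (q : Polynomial ℝ) (s : Set ℝ) (hs : s.Infinite)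
    (h : ∀ t ∈ s, q.eval t = 0) : q = 0 := by
  apply q.eq_zero_of_infinite_isRoot
  exact hs.mono fun x hx => h x hx

lemma eval_aeval₁ (p : MvPolynomial (Fin 2) ℝ) (f : Fin 2 → Polynomial ℝ) (b : ℝ) :
    (MvPolynomial.aeval f p).eval b
      = MvPolynomial.eval (fun i => (f i).eval b) p := by
  induction p using MvPolynomial.induction_on with
  | C a => simp
  | add p q hp hq => simp [hp, hq]
  | mul_X p i hp => simp [hp]

/-- The canonical form of the pizza slice
`Ω = db ∧ dc / ((c − b²)(c − b))`.  Its residue along `c = b` is `g(b) db` with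
`g(b) = 1/(b² − b) = 1/(b−1) − 1/b`, whose residues at `b = 0` and `b = 1` are `−1` and
`+1`.  Uniqueness up to scalar: any polynomial numerator `p` such that `p·Ω` has no pole
at infinity (encoded by cubic decay of `p/((c−b²)(c−b))` on a cone avoiding the two
curves) and whose residues along the two boundary curves are 1-forms with (simple) poles
only at the vertices (encoded: `p(b,b)` and `p(b,b²)` are constant) must be constant. -/
theorem stmt15 (g : ℝ → ℝ) (hg : ∀ b, g b = 1 / (b ^ 2 - b)) :
    (∀ b : ℝ, b ≠ 0 → b ≠ 1 → g b = 1 / (b - 1) - 1 / b) ∧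
    Filter.Tendsto (fun b => b * g b) (nhdsWithin 0 {(0 : ℝ)}ᶜ) (nhds (-1)) ∧
    Filter.Tendsto (fun b => (b - 1) * g b) (nhdsWithin 1 {(1 : ℝ)}ᶜ) (nhds 1) ∧
    ∀ p : MvPolynomial (Fin 2) ℝ,
      (∃ Cb : ℝ, ∀ x : ℝ × ℝ, |x.2| ≤ |x.1| / 2 → 1 ≤ |x.1| →
        |x.1| ^ 3 *
          |MvPolynomial.eval ![x.1, x.2] p / ((x.2 - x.1 ^ 2) * (x.2 - x.1))| ≤ Cb) →
      (∃ k₁ : ℝ, ∀ b : ℝ, MvPolynomial.eval ![b, b] p = k₁) →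
      (∃ k₂ : ℝ, ∀ b : ℝ, MvPolynomial.eval ![b, b ^ 2] p = k₂) →
      ∃ c : ℝ, p = MvPolynomial.C c := by
  refine ⟨?_, ?_, ?_, ?_⟩
  · intro b hb0 hb1
    rw [hg]
    have h1 : b - 1 ≠ 0 := sub_ne_zero.mpr hb1
    have h2 : b ^ 2 - b ≠ 0 := by
      have e : b ^ 2 - b = b * (b - 1) := by ring
      rw [e]; exact mul_ne_zero hb0 h1
    field_simp
    ring
  · have hev : ∀ b : ℝ, b ≠ 0 → b * g b = 1 / (b - 1) := by
      intro b hb0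
      rw [hg]
      rcases eq_or_ne b 1 with rfl | hb1
      · norm_num
      · have h1 : b - 1 ≠ 0 := sub_ne_zero.mpr hb1
        have h2 : b ^ 2 - b ≠ 0 := by
          have e : b ^ 2 - b = b * (b - 1) := by ring
          rw [e]; exact mul_ne_zero hb0 h1
        field_simp
    have hlim : Filter.Tendsto (fun b : ℝ => 1 / (b - 1)) (nhdsWithin 0 {(0 : ℝ)}ᶜ)
        (nhds (-1)) := by
      have hc : ContinuousAt (fun b : ℝ => 1 / (b - 1)) 0 :=
        ContinuousAt.div continuousAt_const (continuousAt_id.sub continuousAt_const)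
          (by norm_num)
      have h : Filter.Tendsto (fun b : ℝ => 1 / (b - 1)) (nhds 0) (nhds (1 / ((0:ℝ) - 1))) := hc
      have e : (1:ℝ) / ((0:ℝ) - 1) = -1 := by norm_num
      rw [e] at h
      exact h.mono_left nhdsWithin_le_nhds
    refine hlim.congr' ?_
    filter_upwards [self_mem_nhdsWithin] with b hb
    exact (hev b hb).symm
  · have hev : ∀ b : ℝ, b ≠ 1 → (b - 1) * g b = 1 / b := by
      intro b hb1
      rw [hg]
      rcases eq_or_ne b 0 with rfl | hb0
      · norm_num
      · have h1 : b - 1 ≠ 0 := sub_ne_zero.mpr hb1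
        have h2 : b ^ 2 - b ≠ 0 := by
          have e : b ^ 2 - b = b * (b - 1) := by ring
          rw [e]; exact mul_ne_zero hb0 h1
        field_simp
    have hlim : Filter.Tendsto (fun b : ℝ => 1 / b) (nhdsWithin 1 {(1 : ℝ)}ᶜ) (nhds 1) := by
      have hc : ContinuousAt (fun b : ℝ => 1 / b) 1 :=
        ContinuousAt.div continuousAt_const continuousAt_id (by norm_num)
      have h : Filter.Tendsto (fun b : ℝ => 1 / b) (nhds 1) (nhds (1 / (1:ℝ))) := hc
      have e : (1:ℝ) / (1:ℝ) = 1 := by norm_num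
      rw [e] at h
      exact h.mono_left nhdsWithin_le_nhds
    refine hlim.congr' ?_
    filter_upwards [self_mem_nhdsWithin] with b hb
    exact (hev b hb).symm
  · rintro p ⟨Cb, hCb⟩ _ _
    set k0 : ℝ := MvPolynomial.eval ![(0:ℝ), 0] p with hk0
    -- Step 1: bound |p(b, t*b)| for |t| ≤ 1/2, b ≥ 1
    have hbound : ∀ t : ℝ, |t| ≤ 1/2 → ∀ b : ℝ, 1 ≤ b →
        |MvPolynomial.eval ![b, t * b] p| ≤ 9/4 * Cb := by
      intro t ht b hb
      have hb0 : (0:ℝ) < b := lt_of_lt_of_le one_pos hb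
      have habsb : |b| = b := abs_of_pos hb0
      have h1 : |t * b| ≤ |b| / 2 := by
        rw [abs_mul, habsb]
        nlinarith [abs_nonneg t]
      have h2 : (1:ℝ) ≤ |b| := by rw [habsb]; exact hb
      have key := hCb (b, t * b) h1 h2
      simp only [habsb] at key
      rcases abs_le.mp ht with ⟨hl, hr⟩
      set P := |MvPolynomial.eval ![b, t * b] p| with hP
      set D := |(t * b - b ^ 2) * (t * b - b)| with hD
      -- key : b ^ 3 * |p.eval / ((t*b - b^2)*(t*b - b))| ≤ Cb
      rw [abs_div] at key
      have hDne : (t * b - b ^ 2) * (t * b - b) ≠ 0 := by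
        have e1 : t * b - b ^ 2 = b * (t - b) := by ring
        have e2 : t * b - b = b * (t - 1) := by ring
        rw [e1, e2]
        apply mul_ne_zero (mul_ne_zero (ne_of_gt hb0) ?_) (mul_ne_zero (ne_of_gt hb0) ?_)
        · intro h; nlinarith
        · intro h; nlinarith
      have hDpos : 0 < D := abs_pos.mpr hDne
      have habsD : D ≤ (9/4) * b ^ 3 := by
        rw [hD]
        have e1 : (t * b - b ^ 2) * (t * b - b) = (b * b) * ((t - b) * (t - 1)) := by ring
        rw [e1, abs_mul, abs_mul, abs_mul, habsb]
        have h3 : |t - b| ≤ (3/2) * b := by rw [abs_le]; constructor <;> nlinarith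
        have h4 : |t - 1| ≤ 3/2 := by rw [abs_le]; constructor <;> nlinarith
        have h5 : |t - b| * |t - 1| ≤ (3/2 * b) * (3/2) :=
          mul_le_mul h3 h4 (abs_nonneg _) (by positivity)
        have h6 : (b * b) * (|t - b| * |t - 1|) ≤ (b * b) * ((3/2 * b) * (3/2)) :=
          mul_le_mul_of_nonneg_left h5 (by positivity)
        nlinarith [h6]
      -- key : b ^ 3 * (P / D) ≤ Cb; conclude P ≤ 9/4 Cb
      have hQnn : 0 ≤ P / D := div_nonneg (abs_nonneg _) (le_of_lt hDpos)
      have hPeq : P = (P / D) * D := (div_mul_cancel₀ P (ne_of_gt hDpos)).symm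
      have hb3 : (1:ℝ) ≤ b ^ 3 := by nlinarith
      calc P = (P / D) * D := hPeq
        _ ≤ (P / D) * ((9/4) * b ^ 3) := by
            exact mul_le_mul_of_nonneg_left habsD hQnn
        _ = (9/4) * (b ^ 3 * (P / D)) := by ring
        _ ≤ 9/4 * Cb := by nlinarith
    -- Step 2: along every line c = t b with |t| ≤ 1/2, p is constant = k0
    have hline : ∀ t : ℝ, |t| ≤ 1/2 → ∀ b : ℝ, MvPolynomial.eval ![b, t * b] p = k0 := by
      intro t ht b
      set q : Polynomial ℝ :=
        MvPolynomial.aeval ![Polynomial.X, Polynomial.C t * Polynomial.X] p with hq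
      have hqe : ∀ b : ℝ, q.eval b = MvPolynomial.eval ![b, t * b] p := by
        intro b
        rw [hq, eval_aeval₁]
        have e : (fun i => Polynomial.eval b (![Polynomial.X, Polynomial.C t * Polynomial.X] i))
            = ![b, t * b] := by
          funext i; fin_cases i <;> simp
        rw [e]
      have hbd : ∀ b : ℝ, 1 ≤ b → |q.eval b| ≤ 9/4 * Cb := by
        intro b hb; rw [hqe]; exact hbound t ht b hb
      have hconst := bounded_poly_const q (9/4 * Cb) hbd b
      rw [hqe, hqe] at hconst
      rw [hconst]
      norm_num
      exact hk0.symm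
    -- Step 3: for b ≠ 0, p(b, c) = k0 for all c
    have hall : ∀ b : ℝ, b ≠ 0 → ∀ c : ℝ, MvPolynomial.eval ![b, c] p = k0 := by
      intro b hb c
      set r : Polynomial ℝ :=
        MvPolynomial.aeval ![Polynomial.C b, Polynomial.C b * Polynomial.X] p
          - Polynomial.C k0 with hr
      have hre : ∀ t : ℝ, r.eval t = MvPolynomial.eval ![b, b * t] p - k0 := by
        intro t
        rw [hr]
        simp only [Polynomial.eval_sub, Polynomial.eval_C]
        rw [eval_aeval₁]
        have e : (fun i => Polynomial.eval t (![Polynomial.C b, Polynomial.C b * Polynomial.X] i))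
            = ![b, b * t] := by
          funext i; fin_cases i <;> simp
        rw [e]
      have hr0 : r = 0 := by
        apply poly_zero_of_infinite r (Set.Ioo 0 (1/2)) (Set.Ioo_infinite (by norm_num))
        intro t htm
        rw [hre]
        have : MvPolynomial.eval ![b, t * b] p = k0 :=
          hline t (by rw [abs_of_pos htm.1]; exact le_of_lt htm.2) b
        rw [mul_comm b t, this, sub_self]
      have := congrArg (Polynomial.eval (c / b)) hr0
      rw [hre] at this
      simp only [Polynomial.eval_zero] at this
      rw [mul_div_cancel₀ c hb] at this
      linarith [this]
    -- Step 4: also for b = 0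
    have hall2 : ∀ b c : ℝ, MvPolynomial.eval ![b, c] p = k0 := by
      intro b c
      set s : Polynomial ℝ :=
        MvPolynomial.aeval ![Polynomial.X, Polynomial.C c] p - Polynomial.C k0 with hs
      have hse : ∀ b : ℝ, s.eval b = MvPolynomial.eval ![b, c] p - k0 := by
        intro b
        rw [hs]
        simp only [Polynomial.eval_sub, Polynomial.eval_C]
        rw [eval_aeval₁]
        have e : (fun i => Polynomial.eval b (![Polynomial.X, Polynomial.C c] i))
            = ![b, c] := by
          funext i; fin_cases i <;> simp
        rw [e]
      have hs0 : s = 0 := by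
        apply poly_zero_of_infinite s (Set.Ioi 0) (Set.Ioi_infinite 0)
        intro b hbm
        rw [hse, hall b (ne_of_gt hbm) c, sub_self]
      have := congrArg (Polynomial.eval b) hs0
      rw [hse] at this
      simp only [Polynomial.eval_zero] at this
      linarith [this]
    refine ⟨k0, ?_⟩
    apply MvPolynomial.funext
    intro x
    have hx : x = ![x 0, x 1] := by
      funext i; fin_cases i <;> rfl
    rw [hx, hall2 (x 0) (x 1)]
    simp
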